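/- Let λ > 0. The function g(θ) = 2/λ − θ/(e^{λθ} − 1) is strictly increasing on (0,∞), and g(θ) → 1/λ as θ → 0⁺; consequently inf_{θ > 0} g(θ) = 1/λ, and the infimum is not attained. -/

import Mathlib

open Real Filter

lemma den_pos (x : ℝ) (hx : 0 < x) : 0 < exp x - 1 := by
  have := Real.add_one_lt_exp hx.ne'
  linarith

lemma num_lt (x : ℝ) (hx : 0 < x) : exp x - 1 < x * exp x := by
  have h := Real.add_one_lt_exp (neg_ne_zero.2 hx.ne')
  rw [Real.exp_neg] at h
  have hpos := Real.exp_pos x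
  have : (-x + 1) * exp x < 1 := by
    calc (-x + 1) * exp x < (exp x)⁻¹ * exp x := by
          exact mul_lt_mul_of_pos_right h hpos
      _ = 1 := inv_mul_cancel₀ hpos.ne'
  nlinarith

theorem stmt_15 (lam : ℝ) (hlam : 0 < lam)
    (g : ℝ → ℝ) (hg : ∀ θ : ℝ, g θ = 2 / lam - θ / (exp (lam * θ) - 1)) :
    StrictMonoOn g (Set.Ioi 0)
      ∧ Tendsto g (nhdsWithin 0 (Set.Ioi 0)) (nhds (1 / lam))
      ∧ IsGLB (g '' Set.Ioi 0) (1 / lam)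
      ∧ (1 / lam) ∉ g '' Set.Ioi 0 := by
  have hgeq : g = fun θ => 2 / lam - θ / (exp (lam * θ) - 1) := funext hg
  subst hgeq
  have hdenpos : ∀ θ : ℝ, θ ∈ Set.Ioi (0:ℝ) → 0 < exp (lam * θ) - 1 := by
    intro θ hθ
    exact den_pos _ (mul_pos hlam hθ)
  -- derivative
  have hderiv : ∀ θ : ℝ, 0 < θ → HasDerivAt (fun t => 2 / lam - t / (exp (lam * t) - 1))
      (0 - (1 * (exp (lam * θ) - 1) - θ * (exp (lam * θ) * lam)) / (exp (lam * θ) - 1) ^ 2) θ := by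
    intro θ hθ
    have hL : HasDerivAt (fun t : ℝ => lam * t) lam θ := by
      simpa using (hasDerivAt_id θ).const_mul lam
    have hE : HasDerivAt (fun t : ℝ => exp (lam * t) - 1) (exp (lam * θ) * lam) θ :=
      ((Real.hasDerivAt_exp (lam * θ)).comp θ hL).sub_const 1
    have hdiv := (hasDerivAt_id θ).div hE (hdenpos θ hθ).ne'
    exact (hasDerivAt_const θ (2 / lam)).sub hdiv
  -- strict mono
  have hmono : StrictMonoOn (fun θ => 2 / lam - θ / (exp (lam * θ) - 1)) (Set.Ioi 0) := by
    apply strictMonoOn_of_deriv_pos (convex_Ioi 0)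
    · apply ContinuousOn.sub continuousOn_const
      apply ContinuousOn.div continuousOn_id
      · fun_prop
      · intro θ hθ; exact (hdenpos θ hθ).ne'
    · intro θ hθ
      rw [interior_Ioi] at hθ
      rw [(hderiv θ hθ).deriv]
      have h1 : exp (lam * θ) - 1 < (lam * θ) * exp (lam * θ) := num_lt _ (mul_pos hlam hθ)
      have h2 : 0 < (exp (lam * θ) - 1) ^ 2 := pow_pos (hdenpos θ hθ) 2
      have h3 : (1 * (exp (lam * θ) - 1) - θ * (exp (lam * θ) * lam)) < 0 := by nlinarith
      have := div_neg_of_neg_of_pos h3 h2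
      linarith
  -- limit
  have hlim : Tendsto (fun θ => 2 / lam - θ / (exp (lam * θ) - 1))
      (nhdsWithin 0 (Set.Ioi 0)) (nhds (1 / lam)) := by
    have T1 : Tendsto (fun y : ℝ => (exp y - 1) / y) (nhdsWithin 0 {(0:ℝ)}ᶜ) (nhds 1) := by
      have h := (Real.hasDerivAt_exp 0)
      rw [hasDerivAt_iff_tendsto_slope] at h
      simp only [Real.exp_zero] at h
      refine h.congr' ?_
      filter_upwards [self_mem_nhdsWithin] with y hy
      simp [slope, Real.exp_zero, div_eq_inv_mul]
    have T2' : Tendsto (fun θ : ℝ => lam * θ) (nhdsWithin 0 (Set.Ioi 0))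
        (nhdsWithin 0 {(0:ℝ)}ᶜ) := by
      apply tendsto_nhdsWithin_of_tendsto_nhds_of_eventually_within _
      · have : Tendsto (fun θ : ℝ => lam * θ) (nhds 0) (nhds (lam * 0)) :=
          (continuous_const.mul continuous_id).tendsto 0
        simpa using this.mono_left nhdsWithin_le_nhds
      · filter_upwards [self_mem_nhdsWithin] with θ hθ
        exact (mul_pos hlam hθ).ne'
    have T2 : Tendsto (fun θ : ℝ => (exp (lam * θ) - 1) / (lam * θ))
        (nhdsWithin 0 (Set.Ioi 0)) (nhds 1) := T1.comp T2'
    have T3 : Tendsto (fun θ : ℝ => (1 / lam) * ((exp (lam * θ) - 1) / (lam * θ))⁻¹)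
        (nhdsWithin 0 (Set.Ioi 0)) (nhds ((1 / lam) * 1⁻¹)) :=
      (T2.inv₀ one_ne_zero).const_mul (1 / lam)
    have T4 : Tendsto (fun θ : ℝ => θ / (exp (lam * θ) - 1))
        (nhdsWithin 0 (Set.Ioi 0)) (nhds (1 / lam)) := by
      have : (1 / lam : ℝ) * 1⁻¹ = 1 / lam := by ring
      rw [← this]
      refine T3.congr' ?_
      filter_upwards [self_mem_nhdsWithin] with θ hθ
      have h1 : exp (lam * θ) - 1 ≠ 0 := (hdenpos θ hθ).ne'
      have h2 : lam * θ ≠ 0 := (mul_pos hlam hθ).ne'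
      field_simp
    have := (tendsto_const_nhds : Tendsto (fun _ : ℝ => 2 / lam) (nhdsWithin 0 (Set.Ioi 0))
      (nhds (2 / lam))).sub T4
    have heq : 2 / lam - 1 / lam = 1 / lam := by field_simp; ring
    rwa [heq] at this
  -- strict lower bound
  have hstrict : ∀ θ : ℝ, 0 < θ → 1 / lam < 2 / lam - θ / (exp (lam * θ) - 1) := by
    intro θ hθ
    have hd := hdenpos θ hθ
    have h1 : lam * θ < exp (lam * θ) - 1 := by
      have := Real.add_one_lt_exp (mul_pos hlam hθ).ne'
      linarith
    have h2 : θ / (exp (lam * θ) - 1) < 1 / lam := by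
      rw [div_lt_div_iff₀ hd hlam]
      nlinarith
    have : 2 / lam - 1 / lam = 1 / lam := by field_simp; ring
    linarith
  refine ⟨hmono, hlim, ⟨?_, ?_⟩, ?_⟩
  · rintro y ⟨θ, hθ, rfl⟩
    exact (hstrict θ hθ).le
  · intro b hb
    refine ge_of_tendsto hlim ?_
    filter_upwards [self_mem_nhdsWithin] with θ hθ
    exact hb ⟨θ, hθ, rfl⟩
  · rintro ⟨θ, hθ, hval⟩
    exact absurd hval (ne_of_lt (hstrict θ hθ)).symm
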